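/- Let T ∈ T_h be a mesh element, k ≥ 0, l ∈ {k-1,k,k+1}, and consider the difference operators δ_T û_T := π_T^l(r_T û_T - v_T) and δ_{TF} û_T := π_F^k(r_T û_T - v_F), where r_T is the potential reconstruction of degree k+1 and û_T = (v_T,(v_F)_{F∈F_T}). Then for all û_T ∈ U_T^{k,l} and all φ ∈ P^k(T)^d: ((∇r_T - G_T)û_T - ∇δ_T û_T, φ)_T = ∑_{F∈F_T} ((δ_{TF} - δ_T)û_T, φ·n_{TF})_F. -/

import Mathlib

open MeasureTheory Finset

/-- Membership in the local polynomial space `P^ℓ`. -/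
def MemPolySpace (d ℓ : ℕ) (f : (Fin d → ℝ) → ℝ) : Prop :=
  ∃ P : MvPolynomial (Fin d) ℝ, P.totalDegree ≤ ℓ ∧ ∀ x, f x = MvPolynomial.eval x P

/-- Membership in `P^ℓ` for an integer degree `ℓ`, with the convention `P^{-1} = {0}`. -/
def MemPolySpaceInt (d : ℕ) (ℓ : ℤ) (f : (Fin d → ℝ) → ℝ) : Prop :=
  if ℓ < 0 then (∀ x, f x = 0) else MemPolySpace d ℓ.toNat f

/-- `i`-th partial derivative. -/
noncomputable def pderiv' (d : ℕ) (f : (Fin d → ℝ) → ℝ) (i : Fin d) (x : Fin d → ℝ) : ℝ :=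
  fderiv ℝ f x (Pi.single i 1)

/-- Laplacian via iterated partial derivatives. -/
noncomputable def lap' (d : ℕ) (f : (Fin d → ℝ) → ℝ) (x : Fin d → ℝ) : ℝ :=
  ∑ i, pderiv' d (fun y => pderiv' d f i y) i x

section ResidualAux
open MvPolynomial

variable {d : ℕ}

lemma totalDegree_pderiv_le' (P : MvPolynomial (Fin d) ℝ) (i : Fin d) (m : ℕ)
    (h : P.totalDegree ≤ m + 1) : (pderiv i P).totalDegree ≤ m := by
  conv_lhs => rw [P.as_sum, map_sum]
  refine totalDegree_finsetSum_le fun s hs => ?_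
  rw [pderiv_monomial]
  rcases Nat.eq_zero_or_pos (s i) with h0 | h1
  · simp [h0]
  · refine (totalDegree_monomial_le _ _).trans ?_
    have hsum : (s.sum fun _ e => e) ≤ m + 1 := le_trans (le_totalDegree hs) h
    have heq : (s - Finsupp.single i 1) + Finsupp.single i 1 = s := by
      ext j
      rcases eq_or_ne j i with rfl | hj
      · simp [Finsupp.tsub_apply]; omega
      · simp [Finsupp.tsub_apply, Finsupp.single_apply, Ne.symm hj, hj]
    have hadd : ((s - Finsupp.single i 1) + Finsupp.single i 1).sum (fun _ e => e)
        = (s - Finsupp.single i 1).sum (fun _ e => e) + 1 := by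
      rw [Finsupp.sum_add_index' (fun _ => rfl) (fun _ _ _ => rfl)]
      simp [Finsupp.sum_single_index]
    rw [heq] at hadd
    simp only [Function.id_def]
    omega

lemma pderiv_eq_zero_of_deg_zero (P : MvPolynomial (Fin d) ℝ) (i : Fin d)
    (h : P.totalDegree = 0) : pderiv i P = 0 := by
  apply pderiv_eq_zero_of_notMem_vars
  rw [mem_vars]
  rintro ⟨s, hs, hi⟩
  have h0 := (totalDegree_eq_zero_iff _ P).mp h s hs i
  rw [Finsupp.mem_support_iff] at hi
  exact hi h0

noncomputable def polyCLM (P : MvPolynomial (Fin d) ℝ) (x : Fin d → ℝ) : (Fin d → ℝ) →L[ℝ] ℝ :=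
  ∑ i, MvPolynomial.eval x (pderiv i P) • ContinuousLinearMap.proj i

lemma hasFDerivAt_eval (P : MvPolynomial (Fin d) ℝ) (x : Fin d → ℝ) :
    HasFDerivAt (fun y => MvPolynomial.eval y P) (polyCLM P x) x := by
  induction P using MvPolynomial.induction_on with
  | C a =>
      have h0 : polyCLM (C a : MvPolynomial (Fin d) ℝ) x = 0 := by
        unfold polyCLM; simp
      rw [h0]
      simpa using hasFDerivAt_const a x
  | add p q hp hq =>
      have h0 : polyCLM (p + q) x = polyCLM p x + polyCLM q x := by
        unfold polyCLM
        rw [← Finset.sum_add_distrib]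
        refine Finset.sum_congr rfl fun i _ => ?_
        rw [map_add, map_add, add_smul]
      simpa [h0] using hp.fun_add hq
  | mul_X p j hp =>
      have h1 : HasFDerivAt (fun y : Fin d → ℝ => MvPolynomial.eval y p * y j)
          (MvPolynomial.eval x p • (ContinuousLinearMap.proj j : (Fin d → ℝ) →L[ℝ] ℝ)
            + x j • polyCLM p x) x :=
        hp.mul (hasFDerivAt_apply j x)
      have h2 : polyCLM (p * X j) x
          = MvPolynomial.eval x p • (ContinuousLinearMap.proj j : (Fin d → ℝ) →L[ℝ] ℝ)
            + x j • polyCLM p x := by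
        unfold polyCLM
        ext y
        simp only [ContinuousLinearMap.add_apply, ContinuousLinearMap.sum_apply,
          ContinuousLinearMap.smul_apply, ContinuousLinearMap.proj_apply, smul_eq_mul,
          Finset.mul_sum]
        have : ∀ i : Fin d, MvPolynomial.eval x (pderiv i (p * X j)) * y i
            = (if i = j then MvPolynomial.eval x p * y j else 0)
              + x j * (MvPolynomial.eval x (pderiv i p) * y i) := by
          intro i
          rw [pderiv_mul, pderiv_X]
          rcases eq_or_ne i j with rfl | hij
          · simp; ring
          · simp [Pi.single_eq_of_ne (Ne.symm hij), hij]; ring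
        rw [Finset.sum_congr rfl fun i _ => this i, Finset.sum_add_distrib,
          Finset.sum_ite_eq' Finset.univ j _]
        simp
      rw [h2]
      have h3 : (fun y : Fin d → ℝ => MvPolynomial.eval y (p * X j))
          = fun y => MvPolynomial.eval y p * y j := by
        funext y; simp
      rw [h3]
      exact h1


lemma pderiv'_eval (P : MvPolynomial (Fin d) ℝ) (i : Fin d) (x : Fin d → ℝ) :
    pderiv' d (fun y => MvPolynomial.eval y P) i x = MvPolynomial.eval x (pderiv i P) := by
  rw [pderiv', (hasFDerivAt_eval P x).fderiv]
  unfold polyCLM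
  simp only [ContinuousLinearMap.sum_apply, ContinuousLinearMap.smul_apply,
    ContinuousLinearMap.proj_apply, smul_eq_mul, Pi.single_apply, mul_ite, mul_one, mul_zero,
    Finset.sum_ite_eq' Finset.univ i]
  simp

lemma MemPolySpace.mono {m m' : ℕ} {f : (Fin d → ℝ) → ℝ} (h : m ≤ m')
    (hf : MemPolySpace d m f) : MemPolySpace d m' f := by
  obtain ⟨P, hP, he⟩ := hf; exact ⟨P, hP.trans h, he⟩

lemma MemPolySpace.continuous {m : ℕ} {f : (Fin d → ℝ) → ℝ}
    (hf : MemPolySpace d m f) : Continuous f := by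
  obtain ⟨P, _, he⟩ := hf
  rw [funext he]
  exact MvPolynomial.continuous_eval (X := ℝ) P

lemma MemPolySpace.pderiv'_mem {m : ℕ} {f : (Fin d → ℝ) → ℝ}
    (hf : MemPolySpace d (m + 1) f) (i : Fin d) : MemPolySpace d m (pderiv' d f i) := by
  obtain ⟨P, hP, he⟩ := hf
  exact ⟨pderiv i P, totalDegree_pderiv_le' P i m hP,
    fun x => by rw [funext he, pderiv'_eval]⟩

lemma pderiv'_zero_of_deg_zero {f : (Fin d → ℝ) → ℝ} (hf : MemPolySpace d 0 f) (i : Fin d)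
    (x : Fin d → ℝ) : pderiv' d f i x = 0 := by
  obtain ⟨P, hP, he⟩ := hf
  rw [funext he, pderiv'_eval, pderiv_eq_zero_of_deg_zero P i (Nat.le_zero.mp hP)]
  simp

lemma MemPolySpace.sum {m : ℕ} {ι : Type*} [Fintype ι] {f : ι → (Fin d → ℝ) → ℝ}
    (hf : ∀ i, MemPolySpace d m (f i)) : MemPolySpace d m (fun x => ∑ i, f i x) := by
  choose P hP he using hf
  refine ⟨∑ i, P i, totalDegree_finsetSum_le fun i _ => hP i, fun x => ?_⟩
  rw [map_sum]
  exact Finset.sum_congr rfl fun i _ => he i x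

lemma MemPolySpace.mul_const {m : ℕ} {f : (Fin d → ℝ) → ℝ} (c : ℝ)
    (hf : MemPolySpace d m f) : MemPolySpace d m (fun x => f x * c) := by
  obtain ⟨P, hP, he⟩ := hf
  refine ⟨P * C c, ?_, fun x => by simp [he x]⟩
  refine (totalDegree_mul P (C c)).trans ?_
  simp [totalDegree_C, hP]

lemma memPolySpaceInt_elim {l : ℤ} {f : (Fin d → ℝ) → ℝ}
    (hf : MemPolySpaceInt d l f) : ∃ m, MemPolySpace d m f := by
  unfold MemPolySpaceInt at hf
  split_ifs at hf with h
  · exact ⟨0, 0, by simp, fun x => by simp [hf x]⟩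
  · exact ⟨l.toNat, hf⟩

end ResidualAux

/-- **Residual identity for the difference operators of the DSGD construction.**
Let `T` be a mesh element with faces `ι`, surface measures `μF`, outward unit normals
`nF`, let `k ≥ 0` and `l ∈ {k-1,k,k+1}`, and let `û_T = (vT,(vF)_F) ∈ U_T^{k,l}`.
With `G` the gradient reconstruction, `r = r_T û_T ∈ P^{k+1}(T)` the potential
reconstruction, `δT := π_T^l (r - vT)` and `δF F := π_F^k (r - vF F)` the difference
operators, for all `φ ∈ P^k(T)^d`,
`((∇r - G û_T) - ∇δT, φ)_T = ∑_F ((δF F - δT), φ·n_{TF})_F`. -/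
theorem residual_identity (d k : ℕ) (l : ℤ)
    (hl : l = (k : ℤ) - 1 ∨ l = (k : ℤ) ∨ l = (k : ℤ) + 1)
    (T : Set (Fin d → ℝ))
    (hTopen : IsOpen T) (hTbdd : Bornology.IsBounded T) (hTpos : 0 < volume T)
    (ι : Type) [Fintype ι]
    (μF : ι → Measure (Fin d → ℝ)) (hμFfin : ∀ F, IsFiniteMeasure (μF F))
    (hμFsupp : ∀ F, μF F (frontier T)ᶜ = 0)
    (nF : ι → Fin d → ℝ)
    -- integration by parts on T, against polynomial functions and vector fields
    (hIBP : ∀ f : (Fin d → ℝ) → ℝ, (∃ m, MemPolySpace d m f) →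
      ∀ φ : Fin d → (Fin d → ℝ) → ℝ, (∀ i, ∃ m, MemPolySpace d m (φ i)) →
        ∫ x in T, ∑ i, pderiv' d f i x * φ i x =
          -(∫ x in T, f x * ∑ i, pderiv' d (φ i) i x) +
            ∑ F, ∫ x, f x * ∑ i, φ i x * nF F i ∂(μF F))
    -- the local unknowns û_T = (vT, (vF F)_F) ∈ U_T^{k,l}
    (vT : (Fin d → ℝ) → ℝ) (hvT : MemPolySpaceInt d l vT)
    (vF : ι → (Fin d → ℝ) → ℝ) (hvF : ∀ F, MemPolySpace d k (vF F))
    -- the gradient reconstruction G_T û_T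
    (G : Fin d → (Fin d → ℝ) → ℝ) (hG : ∀ i, MemPolySpace d k (G i))
    (hGdef : ∀ φ : Fin d → (Fin d → ℝ) → ℝ, (∀ i, MemPolySpace d k (φ i)) →
      ∫ x in T, ∑ i, G i x * φ i x =
        -(∫ x in T, vT x * ∑ i, pderiv' d (φ i) i x) +
          ∑ F, ∫ x, vF F x * ∑ i, φ i x * nF F i ∂(μF F))
    -- the potential reconstruction r_T û_T ∈ P^{k+1}(T)
    (r : (Fin d → ℝ) → ℝ) (hr : MemPolySpace d (k + 1) r)
    (hrdef : ∀ w, MemPolySpace d (k + 1) w →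
      ∫ x in T, ∑ i, pderiv' d r i x * pderiv' d w i x =
        -(∫ x in T, vT x * lap' d w x) +
          ∑ F, ∫ x, vF F x * ∑ i, pderiv' d w i x * nF F i ∂(μF F))
    (hravg : ∫ x in T, (r x - vT x) = 0)
    -- the difference operators δ_T û_T = π_T^l (r - vT) and δ_{TF} û_T = π_F^k (r - vF)
    (δT : (Fin d → ℝ) → ℝ) (hδT : MemPolySpaceInt d l δT)
    (hδTdef : ∀ w, MemPolySpaceInt d l w →
      ∫ x in T, (δT x - (r x - vT x)) * w x = 0)
    (δF : ι → (Fin d → ℝ) → ℝ) (hδF : ∀ F, MemPolySpace d k (δF F))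
    (hδFdef : ∀ F, ∀ w, MemPolySpace d k w →
      ∫ x, (δF F x - (r x - vF F x)) * w x ∂(μF F) = 0) :
    ∀ φ : Fin d → (Fin d → ℝ) → ℝ, (∀ i, MemPolySpace d k (φ i)) →
      ∫ x in T, ∑ i, (pderiv' d r i x - G i x - pderiv' d δT i x) * φ i x =
        ∑ F, ∫ x, (δF F x - δT x) * ∑ i, φ i x * nF F i ∂(μF F) := by
  classical
  intro φ hφ
  have hcφ : ∀ i, Continuous (φ i) := fun i => (hφ i).continuous
  have hcr : Continuous r := hr.continuous
  have hcpr : ∀ i : Fin d, Continuous (pderiv' d r i) :=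
    fun i => (hr.pderiv'_mem i).continuous
  have hcG : ∀ i, Continuous (G i) := fun i => (hG i).continuous
  obtain ⟨mT, hvT'⟩ := memPolySpaceInt_elim hvT
  obtain ⟨mδ, hδT'⟩ := memPolySpaceInt_elim hδT
  have hcvT : Continuous vT := hvT'.continuous
  have hcδT : Continuous δT := hδT'.continuous
  have hcpδ : ∀ i : Fin d, Continuous (pderiv' d δT i) :=
    fun i => ((hδT'.mono (Nat.le_succ mδ)).pderiv'_mem i).continuous
  have hcvF : ∀ F, Continuous (vF F) := fun F => (hvF F).continuous
  have hcδF : ∀ F, Continuous (δF F) := fun F => (hδF F).continuous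
  have hcpφ : ∀ i : Fin d, Continuous (pderiv' d (φ i) i) :=
    fun i => (((hφ i).mono (Nat.le_succ k)).pderiv'_mem i).continuous
  have hcdiv : Continuous (fun x => ∑ i, pderiv' d (φ i) i x) :=
    continuous_finset_sum _ fun i _ => hcpφ i
  have hcφn : ∀ F, Continuous (fun x => ∑ i, φ i x * nF F i) :=
    fun F => continuous_finset_sum _ fun i _ => (hcφ i).mul continuous_const
  -- integrability
  have hintT : ∀ f : (Fin d → ℝ) → ℝ, Continuous f → Integrable f (volume.restrict T) := by
    intro f hf
    exact (hf.continuousOn.integrableOn_compact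
      (Metric.isCompact_of_isClosed_isBounded isClosed_closure hTbdd.closure)).mono_set
      subset_closure
  have hKfr : IsCompact (frontier T) :=
    Metric.isCompact_of_isClosed_isBounded isClosed_frontier
      (hTbdd.closure.subset frontier_subset_closure)
  have hintF : ∀ F, ∀ f : (Fin d → ℝ) → ℝ, Continuous f → Integrable f (μF F) := by
    intro F f hf
    obtain ⟨C, hC⟩ := hKfr.exists_bound_of_continuousOn hf.continuousOn
    have := hμFfin F
    refine (integrable_const C).mono' hf.aestronglyMeasurable ?_
    have hae : ∀ᵐ x ∂(μF F), x ∈ frontier T := by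
      rw [ae_iff]
      exact hμFsupp F
    filter_upwards [hae] with x hx using hC x hx
  -- div φ belongs to P^l
  have hdivl : MemPolySpaceInt d l (fun x => ∑ i, pderiv' d (φ i) i x) := by
    unfold MemPolySpaceInt
    split_ifs with h
    · have hk : k = 0 := by rcases hl with h' | h' | h' <;> omega
      intro x
      exact Finset.sum_eq_zero fun i _ => pderiv'_zero_of_deg_zero (hk ▸ hφ i) i x
    · have hk : k ≤ l.toNat + 1 := by rcases hl with h' | h' | h' <;> omega
      exact MemPolySpace.sum fun i => ((hφ i).mono hk).pderiv'_mem i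
  have hφpoly : ∀ i, ∃ m, MemPolySpace d m (φ i) := fun i => ⟨k, hφ i⟩
  have h1 := hIBP r ⟨k + 1, hr⟩ φ hφpoly
  have h3 := hIBP δT ⟨mδ, hδT'⟩ φ hφpoly
  have h2 := hGdef φ hφ
  -- volumetric projection identity
  have hiδTd : Integrable (fun x => δT x * ∑ i, pderiv' d (φ i) i x) (volume.restrict T) := by
    exact hintT _ (hcδT.mul hcdiv)
  have hird : Integrable (fun x => r x * ∑ i, pderiv' d (φ i) i x) (volume.restrict T) := by
    exact hintT _ (hcr.mul hcdiv)
  have hivd : Integrable (fun x => vT x * ∑ i, pderiv' d (φ i) i x) (volume.restrict T) := by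
    exact hintT _ (hcvT.mul hcdiv)
  have hiaddd : Integrable (fun x => δT x * (∑ i, pderiv' d (φ i) i x)
      + vT x * (∑ i, pderiv' d (φ i) i x)) (volume.restrict T) := by
    exact hiδTd.add hivd
  have hD : ∫ x in T, (δT x - (r x - vT x)) * ∑ i, pderiv' d (φ i) i x = 0 :=
    hδTdef _ hdivl
  have hDsplit : (∫ x in T, δT x * ∑ i, pderiv' d (φ i) i x)
      = (∫ x in T, r x * ∑ i, pderiv' d (φ i) i x)
        - (∫ x in T, vT x * ∑ i, pderiv' d (φ i) i x) := by
    have e1 : (fun x => (δT x - (r x - vT x)) * ∑ i, pderiv' d (φ i) i x)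
        = fun x => (δT x * (∑ i, pderiv' d (φ i) i x) + vT x * (∑ i, pderiv' d (φ i) i x))
            - r x * (∑ i, pderiv' d (φ i) i x) := by
      funext x; ring
    rw [e1, integral_sub hiaddd hird, integral_add hiδTd hivd] at hD
    linarith
  -- face projection identities
  have hFace : ∀ F, (∫ x, (δF F x - δT x) * ∑ i, φ i x * nF F i ∂(μF F))
      = (∫ x, r x * ∑ i, φ i x * nF F i ∂(μF F))
        - (∫ x, vF F x * ∑ i, φ i x * nF F i ∂(μF F))
        - (∫ x, δT x * ∑ i, φ i x * nF F i ∂(μF F)) := by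
    intro F
    have hmem : MemPolySpace d k (fun x => ∑ i, φ i x * nF F i) :=
      MemPolySpace.sum fun i => (hφ i).mul_const (nF F i)
    have hiδF : Integrable (fun x => δF F x * ∑ i, φ i x * nF F i) (μF F) := by
      exact hintF F _ ((hcδF F).mul (hcφn F))
    have hir : Integrable (fun x => r x * ∑ i, φ i x * nF F i) (μF F) := by
      exact hintF F _ (hcr.mul (hcφn F))
    have hiv : Integrable (fun x => vF F x * ∑ i, φ i x * nF F i) (μF F) := by
      exact hintF F _ ((hcvF F).mul (hcφn F))
    have hiδT : Integrable (fun x => δT x * ∑ i, φ i x * nF F i) (μF F) := by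
      exact hintF F _ (hcδT.mul (hcφn F))
    have hiadd : Integrable (fun x => δF F x * (∑ i, φ i x * nF F i)
        + vF F x * (∑ i, φ i x * nF F i)) (μF F) := by
      exact hiδF.add hiv
    have hE : ∫ x, (δF F x - (r x - vF F x)) * ∑ i, φ i x * nF F i ∂(μF F) = 0 :=
      hδFdef F _ hmem
    have e1 : (fun x => (δF F x - (r x - vF F x)) * ∑ i, φ i x * nF F i)
        = fun x => (δF F x * (∑ i, φ i x * nF F i) + vF F x * (∑ i, φ i x * nF F i))
            - r x * (∑ i, φ i x * nF F i) := by
      funext x; ring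
    rw [e1, integral_sub hiadd hir, integral_add hiδF hiv] at hE
    have e2 : (fun x => (δF F x - δT x) * ∑ i, φ i x * nF F i)
        = fun x => δF F x * (∑ i, φ i x * nF F i) - δT x * (∑ i, φ i x * nF F i) := by
      funext x; ring
    rw [e2, integral_sub hiδF hiδT]
    linarith
  -- split the left-hand side
  have hint1 : Integrable (fun x => ∑ i, pderiv' d r i x * φ i x) (volume.restrict T) := by
    exact hintT _ (continuous_finset_sum _ fun i _ => (hcpr i).mul (hcφ i))
  have hint2 : Integrable (fun x => ∑ i, G i x * φ i x) (volume.restrict T) := by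
    exact hintT _ (continuous_finset_sum _ fun i _ => (hcG i).mul (hcφ i))
  have hint3 : Integrable (fun x => ∑ i, pderiv' d δT i x * φ i x) (volume.restrict T) := by
    exact hintT _ (continuous_finset_sum _ fun i _ => (hcpδ i).mul (hcφ i))
  have hint23 : Integrable (fun x => (∑ i, G i x * φ i x)
      + (∑ i, pderiv' d δT i x * φ i x)) (volume.restrict T) := by
    exact hint2.add hint3
  have hLHS : (∫ x in T, ∑ i, (pderiv' d r i x - G i x - pderiv' d δT i x) * φ i x)
      = (∫ x in T, ∑ i, pderiv' d r i x * φ i x)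
        - (∫ x in T, ∑ i, G i x * φ i x)
        - (∫ x in T, ∑ i, pderiv' d δT i x * φ i x) := by
    have e : (fun x => ∑ i, (pderiv' d r i x - G i x - pderiv' d δT i x) * φ i x)
        = fun x => (∑ i, pderiv' d r i x * φ i x)
            - ((∑ i, G i x * φ i x) + (∑ i, pderiv' d δT i x * φ i x)) := by
      funext x
      rw [← Finset.sum_add_distrib, ← Finset.sum_sub_distrib]
      exact Finset.sum_congr rfl fun i _ => by ring
    rw [e, integral_sub hint1 hint23, integral_add hint2 hint3]
    ring
  rw [hLHS, h1, h2, h3]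
  have hR : (∑ F, ∫ x, (δF F x - δT x) * ∑ i, φ i x * nF F i ∂(μF F))
      = (∑ F, ∫ x, r x * ∑ i, φ i x * nF F i ∂(μF F))
        - (∑ F, ∫ x, vF F x * ∑ i, φ i x * nF F i ∂(μF F))
        - (∑ F, ∫ x, δT x * ∑ i, φ i x * nF F i ∂(μF F)) := by
    rw [← Finset.sum_sub_distrib, ← Finset.sum_sub_distrib]
    exact Finset.sum_congr rfl fun F _ => hFace F
  rw [hR]
  linarith
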